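/- For a compact set A ⊆ ℝ^p and s > 0, the polarization constant relates to the covering radius: 𝒫_s(A; N)^{1/s} ≥ 1/ρ_N(A), where ρ_N(A) is the N-point covering radius of A. Moreover, lim_{s→∞} 𝒫_s(A;N)^{1/s} = 1/ρ_N(A). -/

import Mathlib

open scoped ENNReal BigOperators NNReal

/-- The `N`-th Riesz `s`-polarization constant of `A`. -/
noncomputable def rPolConst {p : ℕ} (s : ℝ) (A : Set (EuclideanSpace ℝ (Fin p))) (N : ℕ) : ℝ≥0∞ :=
  ⨆ x : {x : Fin N → EuclideanSpace ℝ (Fin p) // ∀ j, x j ∈ A},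
    ⨅ y ∈ A, ∑ j, (edist y (x.1 j) ^ s)⁻¹

/-- The `N`-point covering radius (mesh norm) of `A`. -/
noncomputable def covRadius {p : ℕ} (A : Set (EuclideanSpace ℝ (Fin p))) (N : ℕ) : ℝ≥0∞ :=
  ⨅ x : {x : Fin N → EuclideanSpace ℝ (Fin p) // ∀ j, x j ∈ A},
    ⨆ y ∈ A, ⨅ j, edist y (x.1 j)

private lemma rpow_iInf' {ι : Sort*} (f : ι → ℝ≥0∞) {s : ℝ} (hs : 0 < s) :
    (⨅ i, f i) ^ s = ⨅ i, f i ^ s := by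
  simpa only [ENNReal.orderIsoRpow_apply] using map_iInf (ENNReal.orderIsoRpow s hs) f

private lemma rpow_iSup' {ι : Sort*} (f : ι → ℝ≥0∞) {s : ℝ} (hs : 0 < s) :
    (⨆ i, f i) ^ s = ⨆ i, f i ^ s := by
  simpa only [ENNReal.orderIsoRpow_apply] using map_iSup (ENNReal.orderIsoRpow s hs) f

private lemma natpow_tendsto (N : ℕ) (hN : 0 < N) :
    Filter.Tendsto (fun s : ℝ => (N:ℝ≥0∞)^(1/s)) Filter.atTop (nhds 1) := by
  have h0 : Filter.Tendsto (fun s : ℝ => 1/s) Filter.atTop (nhds 0) := by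
    simpa [one_div] using tendsto_inv_atTop_zero
  have hN0 : (N:ℝ≥0) ≠ 0 := Nat.cast_ne_zero.2 hN.ne'
  have h1 : Filter.Tendsto (fun s : ℝ => ((N:ℝ≥0)^(1/s) : ℝ≥0)) Filter.atTop (nhds 1) := by
    have := Filter.Tendsto.nnrpow (tendsto_const_nhds :
      Filter.Tendsto (fun _ : ℝ => (N:ℝ≥0)) Filter.atTop (nhds (N:ℝ≥0))) h0 (Or.inl hN0)
    simpa using this
  have := ENNReal.tendsto_coe.mpr h1
  refine this.congr fun s => ?_
  rw [ENNReal.coe_rpow_of_ne_zero hN0]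
  norm_num

private lemma pol_lower {p : ℕ} (A : Set (EuclideanSpace ℝ (Fin p))) (N : ℕ) (hN : 0 < N)
    {s : ℝ} (hs : 0 < s) : ((covRadius A N) ^ s)⁻¹ ≤ rPolConst s A N := by
  haveI : Nonempty (Fin N) := ⟨⟨0, hN⟩⟩
  rw [covRadius, rpow_iInf' _ hs, ENNReal.inv_iInf, rPolConst]
  refine iSup_mono fun x => ?_
  refine le_iInf₂ fun y hy => ?_
  have h1 : ⨅ j, edist y (x.1 j) ≤ ⨆ y ∈ A, ⨅ j, edist y (x.1 j) :=
    le_biSup (fun y => ⨅ j, edist y (x.1 j)) hy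
  calc ((⨆ y ∈ A, ⨅ j, edist y (x.1 j)) ^ s)⁻¹
      ≤ ((⨅ j, edist y (x.1 j)) ^ s)⁻¹ :=
        ENNReal.inv_le_inv.2 (ENNReal.rpow_le_rpow h1 hs.le)
    _ = ⨆ j, (edist y (x.1 j) ^ s)⁻¹ := by rw [rpow_iInf' _ hs, ENNReal.inv_iInf]
    _ ≤ ∑ j, (edist y (x.1 j) ^ s)⁻¹ :=
        iSup_le fun j => Finset.single_le_sum (f := fun j => (edist y (x.1 j) ^ s)⁻¹)
          (fun _ _ => zero_le) (Finset.mem_univ j)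

private lemma pol_upper {p : ℕ} (A : Set (EuclideanSpace ℝ (Fin p))) (N : ℕ) (hN : 0 < N)
    {s : ℝ} (hs : 0 < s) : rPolConst s A N ≤ N * ((covRadius A N) ^ s)⁻¹ := by
  have hN0 : (N : ℝ≥0∞) ≠ 0 := Nat.cast_ne_zero.2 hN.ne'
  have hNt : (N : ℝ≥0∞) ≠ ∞ := ENNReal.natCast_ne_top N
  rw [rPolConst]
  refine iSup_le fun x => ?_
  have hstep : ∀ y : EuclideanSpace ℝ (Fin p),
      ∑ j, (edist y (x.1 j) ^ s)⁻¹ ≤ N * ((⨅ j, edist y (x.1 j)) ^ s)⁻¹ := by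
    intro y
    calc ∑ j, (edist y (x.1 j) ^ s)⁻¹
        ≤ ∑ _j : Fin N, ((⨅ j, edist y (x.1 j)) ^ s)⁻¹ := by
          refine Finset.sum_le_sum fun j _ => ?_
          exact ENNReal.inv_le_inv.2 (ENNReal.rpow_le_rpow (iInf_le _ j) hs.le)
      _ = N * ((⨅ j, edist y (x.1 j)) ^ s)⁻¹ := by
          simp [Finset.sum_const, nsmul_eq_mul]
  calc ⨅ y ∈ A, ∑ j, (edist y (x.1 j) ^ s)⁻¹
      ≤ ⨅ y ∈ A, (N : ℝ≥0∞) * ((⨅ j, edist y (x.1 j)) ^ s)⁻¹ :=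
        iInf_mono fun y => iInf_mono fun _ => hstep y
    _ = (N : ℝ≥0∞) * ⨅ y ∈ A, ((⨅ j, edist y (x.1 j)) ^ s)⁻¹ := by
        simp_rw [← ENNReal.mul_iInf_of_ne hN0 hNt]
    _ = (N : ℝ≥0∞) * ((⨆ y ∈ A, ⨅ j, edist y (x.1 j)) ^ s)⁻¹ := by
        simp_rw [rpow_iSup' _ hs, ENNReal.inv_iSup]
    _ ≤ (N : ℝ≥0∞) * ((covRadius A N) ^ s)⁻¹ := by
        refine mul_le_mul_right (ENNReal.inv_le_inv.2 (ENNReal.rpow_le_rpow ?_ hs.le)) _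
        exact iInf_le _ x

theorem stmt4 {p : ℕ} (A : Set (EuclideanSpace ℝ (Fin p))) (hA : IsCompact A)
    (hne : A.Nonempty) (N : ℕ) (hN : 0 < N) :
    (∀ s : ℝ, 0 < s → (covRadius A N)⁻¹ ≤ rPolConst s A N ^ (1 / s)) ∧
      Filter.Tendsto (fun s : ℝ => rPolConst s A N ^ (1 / s))
        Filter.atTop (nhds (covRadius A N)⁻¹) := by
  set ρ := covRadius A N with hρ
  have hlow : ∀ s : ℝ, 0 < s → ρ⁻¹ ≤ rPolConst s A N ^ (1 / s) := by
    intro s hs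
    have h := ENNReal.rpow_le_rpow (pol_lower A N hN hs) (by positivity : (0:ℝ) ≤ 1/s)
    calc ρ⁻¹ = ((ρ ^ s)⁻¹) ^ (1/s) := by
          rw [ENNReal.inv_rpow, ← ENNReal.rpow_mul, mul_one_div, div_self hs.ne', ENNReal.rpow_one]
      _ ≤ rPolConst s A N ^ (1/s) := h
  have hup : ∀ s : ℝ, 0 < s →
      rPolConst s A N ^ (1/s) ≤ (N : ℝ≥0∞) ^ (1/s) * ρ⁻¹ := by
    intro s hs
    have h := ENNReal.rpow_le_rpow (pol_upper A N hN hs) (by positivity : (0:ℝ) ≤ 1/s)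
    calc rPolConst s A N ^ (1/s) ≤ ((N : ℝ≥0∞) * (ρ ^ s)⁻¹) ^ (1/s) := h
      _ = (N : ℝ≥0∞) ^ (1/s) * ρ⁻¹ := by
          rw [ENNReal.mul_rpow_of_nonneg _ _ (by positivity : (0:ℝ) ≤ 1/s),
            ENNReal.inv_rpow, ← ENNReal.rpow_mul, mul_one_div, div_self hs.ne',
            ENNReal.rpow_one]
  refine ⟨hlow, ?_⟩
  have hev : ∀ᶠ s : ℝ in Filter.atTop, 0 < s := Filter.eventually_gt_atTop 0
  by_cases hρ0 : ρ = 0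
  · have : ∀ᶠ s : ℝ in Filter.atTop, rPolConst s A N ^ (1/s) = ρ⁻¹ := by
      filter_upwards [hev] with s hs
      have h1 : (⊤:ℝ≥0∞) ≤ rPolConst s A N ^ (1/s) := by
        simpa only [hρ0, ENNReal.inv_zero] using hlow s hs
      rw [hρ0, ENNReal.inv_zero, top_le_iff.1 h1]
    exact Filter.Tendsto.congr' (Filter.EventuallyEq.symm this) tendsto_const_nhds
  · have hmul : Filter.Tendsto (fun s : ℝ => (N : ℝ≥0∞) ^ (1/s) * ρ⁻¹)
        Filter.atTop (nhds ρ⁻¹) := by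
      have := ENNReal.Tendsto.mul_const (b := ρ⁻¹) (natpow_tendsto N hN) (Or.inl one_ne_zero)
      simpa using this
    refine tendsto_of_tendsto_of_tendsto_of_le_of_le' tendsto_const_nhds hmul ?_ ?_
    · filter_upwards [hev] with s hs using hlow s hs
    · filter_upwards [hev] with s hs using hup s hs
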